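/- arXiv:1512.02685 — 2 statements merged into one kernel-verified Lean document; each statement's English description precedes it below -/
import Mathlib

section
/- Let q = 4 and let k be an odd positive multiple of 3. Then P_1(k) ≠ 0 with valuation at infinity equal to the smallest multiple of 12 strictly greater than k if and only if k > 3 and (k ≡ 1 mod 4, or k ≡ 3 mod 16, or k ≡ 7 mod 16). Moreover, when this condition holds, the family indexed by all monic irreducible ℘ ∈ F_4[t] with ℘-th member the image of (1-℘^k)^{-1} in K_∞ is summable and its sum P(k) has valuation equal to the smallest multiple of 12 strictly greater than k; in particular P(k) ≠ 0. -/
noncomputable instance (K : Type*) [Field K] : DecidableEq (RatFunc K) :=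
  Classical.decEq _

/-- The canonical embedding of the rational function field `Fq(t)` into its completion
`K_∞ = RatFunc.CompletionAtInfty Fq` at the place at infinity. -/
noncomputable def toInfty {Fq : Type*} [Field Fq] (x : RatFunc Fq) :
    RatFunc.CompletionAtInfty Fq :=
  @UniformSpace.Completion.coe' (RatFunc Fq)
    (RatFunc.inftyValued Fq).toUniformSpace x

/-- `P_d(k) = Σ 1/(1 - ℘^k) ∈ F_q(t)`, the (finite) sum over all monic irreducible
`℘ ∈ F_q[t]` of degree `d`. -/
noncomputable def Pd (Fq : Type*) [Field Fq] (d k : ℕ) : RatFunc Fq :=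
  ∑ᶠ ℘ ∈ {P : Polynomial Fq | P.Monic ∧ Irreducible P ∧ P.natDegree = d},
    (1 - algebraMap (Polynomial Fq) (RatFunc Fq) ℘ ^ k)⁻¹


open Polynomial Finset

section Basics
variable (Fq : Type*) [Field Fq] [Fintype Fq]

theorem myCharP (hcard : Fintype.card Fq = 4) : CharP Fq 2 := by
  obtain ⟨p, hc⟩ := CharP.exists Fq
  have hp : p.Prime := CharP.char_is_prime Fq p
  obtain ⟨n, hn⟩ := FiniteField.card Fq p
  have hdvd : p ∣ 4 := by
    rw [← hcard, hn.2]; exact dvd_pow_self p n.ne_zero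
  have : p = 2 := by
    have := hp.two_le
    have h4 := Nat.le_of_dvd (by norm_num) hdvd
    interval_cases p
    · rfl
    · exact absurd hdvd (by norm_num)
    · exact absurd hp (by norm_num)
  exact this ▸ hc

theorem sum_pow_eq (hcard : Fintype.card Fq = 4) (i : ℕ) (hi : i ≠ 0) :
    ∑ b : Fq, b ^ i = if 3 ∣ i then 1 else 0 := by
  classical
  haveI := myCharP Fq hcard
  let φ : Fqˣ ↪ Fq := ⟨fun x ↦ x, Units.val_injective⟩
  have hmap : univ.map φ = univ \ {0} := by
    ext x
    simp only [mem_map, mem_univ, Function.Embedding.coeFn_mk, true_and, mem_sdiff,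
      mem_singleton, φ]; exact isUnit_iff_ne_zero
  have h1 : ∑ b : Fq, b ^ i = ∑ x : Fqˣ, (x ^ i : Fq) := by
    calc ∑ b : Fq, b ^ i = ∑ x ∈ univ \ {(0 : Fq)}, x ^ i := by
          rw [← sum_sdiff ({0} : Finset Fq).subset_univ, sum_singleton, zero_pow hi, add_zero]
      _ = ∑ x : Fqˣ, (x ^ i : Fq) := by simp [φ, ← hmap, univ.sum_map φ]
  rw [h1, FiniteField.sum_pow_units, hcard]
  norm_num
  split <;> [skip; rfl]
  · have : (2 : Fq) = 0 := by exact_mod_cast CharP.cast_eq_zero Fq 2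
    have : (-1 : Fq) = 1 := by
      rw [neg_eq_iff_add_eq_zero, ← two_mul]
      simp [this]
    exact this
end Basics


section PS
variable {Fq : Type*} [Field Fq] [Fintype Fq]

-- abbreviations
noncomputable def hh (k : ℕ) (c : Fq) : PowerSeries Fq :=
  (PowerSeries.X : PowerSeries Fq) ^ k - (1 - PowerSeries.C c * PowerSeries.X) ^ k

theorem constantCoeff_hh (k : ℕ) (hk : 0 < k) (c : Fq) :
    PowerSeries.constantCoeff (hh k c) = -1 := by
  simp [hh, map_pow, zero_pow hk.ne']

theorem hh_ne_zero (k : ℕ) (hk : 0 < k) (c : Fq) : hh k c ≠ 0 := fun h => by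
  have := constantCoeff_hh k hk c
  rw [h, map_zero] at this
  exact one_ne_zero (neg_eq_zero.mp this.symm)

-- the inverse of (1 - C c X)^k
noncomputable def Vs (k : ℕ) (c : Fq) : PowerSeries Fq :=
  PowerSeries.rescale c (PowerSeries.invOneSubPow Fq k).val

theorem gV (k : ℕ) (c : Fq) : (1 - PowerSeries.C c * PowerSeries.X) ^ k * Vs k c = 1 := by
  have h1 : ((1 : PowerSeries Fq) - PowerSeries.C c * PowerSeries.X) ^ k
      = PowerSeries.rescale c ((1 - PowerSeries.X) ^ k) := by
    rw [map_pow, map_sub, map_one, PowerSeries.rescale_X]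
  rw [h1, Vs, ← map_mul, ← PowerSeries.invOneSubPow_inv_eq_one_sub_pow,
    Units.inv_eq_val_inv, Units.inv_mul, map_one]

theorem coeff_Vs (k : ℕ) (hk : 0 < k) (c : Fq) (i : ℕ) :
    PowerSeries.coeff i (Vs k c) = c ^ i * ((k - 1 + i).choose (k - 1) : Fq) := by
  rw [Vs, PowerSeries.coeff_rescale, PowerSeries.invOneSubPow_val_eq_mk_sub_one_add_choose_of_pos Fq k hk,
    PowerSeries.coeff_mk]

theorem coeff_hh_inv (k : ℕ) (hk : 0 < k) (c : Fq) (i : ℕ) (hi : i < k) :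
    PowerSeries.coeff i (hh k c)⁻¹ = -(PowerSeries.coeff i (Vs k c)) := by
  have hc : PowerSeries.constantCoeff (hh k c) ≠ 0 := by
    rw [constantCoeff_hh k hk c]; simp
  have hinv : (hh k c)⁻¹ * hh k c = 1 := PowerSeries.inv_mul_cancel _ hc
  have hne : hh k c ≠ 0 := hh_ne_zero k hk c
  have key : (hh k c)⁻¹ = PowerSeries.X ^ k * (Vs k c * (hh k c)⁻¹) - Vs k c := by
    have h2 : Vs k c * hh k c = Vs k c * PowerSeries.X ^ k - 1 := by
      rw [hh, mul_sub]
      rw [show Vs k c * (1 - PowerSeries.C c * PowerSeries.X) ^ k = 1 by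
        rw [mul_comm]; exact gV k c]
    apply mul_right_cancel₀ hne
    have e1 : (PowerSeries.X ^ k * (Vs k c * (hh k c)⁻¹) - Vs k c) * hh k c
        = PowerSeries.X ^ k * Vs k c * ((hh k c)⁻¹ * hh k c) - Vs k c * hh k c := by ring
    rw [e1, hinv, mul_one, h2]
    ring
  rw [key, map_sub, PowerSeries.coeff_X_pow_mul', if_neg (by omega), zero_sub]

theorem coeff_H (hcard : Fintype.card Fq = 4) (k : ℕ) (hk : 0 < k) (i : ℕ) (hi : i < k) :
    PowerSeries.coeff i (∑ c : Fq, (hh k c)⁻¹)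
      = if 3 ∣ i ∧ i ≠ 0 then (((k - 1 + i).choose (k - 1) : ℕ) : Fq) else 0 := by
  haveI := myCharP Fq hcard
  rw [map_sum]
  have : ∀ c : Fq, PowerSeries.coeff i (hh k c)⁻¹
      = -(c ^ i * ((k - 1 + i).choose (k - 1) : Fq)) := fun c => by
    rw [coeff_hh_inv k hk c i hi, coeff_Vs k hk c i]
  rw [Finset.sum_congr rfl fun c _ => this c]
  simp only [Finset.sum_neg_distrib]
  rcases eq_or_ne i 0 with rfl | hi0
  · simp only [pow_zero, one_mul, Finset.sum_const, card_univ, hcard]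
    rw [if_neg (by simp)]
    have h4 : ((4 : ℕ) : Fq) = 0 := by
      have := FiniteField.cast_card_eq_zero Fq; rwa [hcard] at this
    have h4' : (4 : Fq) = 0 := by exact_mod_cast h4
    simp [h4']
  · rw [← Finset.sum_mul, sum_pow_eq Fq hcard i hi0]
    by_cases h3 : 3 ∣ i
    · rw [if_pos h3, if_pos ⟨h3, hi0⟩, one_mul]
      rw [neg_eq_iff_add_eq_zero, ← two_mul]
      have : (2 : Fq) = 0 := by exact_mod_cast CharP.cast_eq_zero Fq 2
      rw [this, zero_mul]
    · rw [if_neg h3, if_neg (by tauto), zero_mul, neg_zero]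
end PS
section Reflect
open Polynomial Finset
variable {R : Type*} [CommRing R]

theorem reflect_sum' {β : Type*} (N : ℕ) (s : Finset β) (f : β → R[X]) :
    reflect N (∑ b ∈ s, f b) = ∑ b ∈ s, reflect N (f b) := by
  classical
  induction s using Finset.induction_on with
  | empty => simp [reflect_zero]
  | insert _ _ hns ih =>
    rw [Finset.sum_insert hns, Finset.sum_insert hns, reflect_add, ih]

theorem reflect_prod' {β : Type*} [IsDomain R] (k : ℕ) (s : Finset β) (f : β → R[X])
    (h : ∀ b ∈ s, (f b).natDegree ≤ k) :
    reflect (s.card * k) (∏ b ∈ s, f b) = ∏ b ∈ s, reflect k (f b) := by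
  classical
  induction s using Finset.induction_on with
  | empty => simp [reflect_C]
  | insert a s hns ih =>
    rw [Finset.prod_insert hns, Finset.prod_insert hns, Finset.card_insert_of_notMem hns,
      add_mul, one_mul]
    have hdeg : (∏ b ∈ s, f b).natDegree ≤ s.card * k := by
      refine le_trans (Polynomial.natDegree_prod_le s f) ?_
      calc ∑ b ∈ s, (f b).natDegree ≤ ∑ _b ∈ s, k :=
            Finset.sum_le_sum fun b hb => h b (Finset.mem_insert_of_mem hb)
        _ = s.card * k := by rw [Finset.sum_const, smul_eq_mul]
    rw [add_comm (s.card * k) k, reflect_mul _ _ (h a (Finset.mem_insert_self a s)) hdeg, ih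
      fun b hb => h b (Finset.mem_insert_of_mem hb)]

theorem reflect_pow' (p : R[X]) (N n : ℕ) (h : p.natDegree ≤ N) :
    reflect (n * N) (p ^ n) = reflect N p ^ n := by
  induction n with
  | zero => simp [reflect_C]
  | succ n ih =>
    have hdeg : (p ^ n).natDegree ≤ n * N :=
      le_trans (Polynomial.natDegree_pow_le) (by exact Nat.mul_le_mul_left n h)
    rw [pow_succ, pow_succ, show (n + 1) * N = n * N + N by ring,
      reflect_mul _ _ hdeg h, ih]

end Reflect

section APoly
open Polynomial Finset
variable {Fq : Type*} [Field Fq] [Fintype Fq]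

/-- `h_c = 1 - (X + c)^k`. -/
noncomputable def hp (k : ℕ) (c : Fq) : Fq[X] := 1 - (Polynomial.X + Polynomial.C c) ^ k

theorem hp_natDegree (k : ℕ) (hk : 0 < k) (c : Fq) : (hp k c).natDegree = k := by
  rw [hp, ← neg_sub, natDegree_neg, ← Polynomial.C_1, natDegree_sub_C,
    Polynomial.natDegree_pow, Polynomial.natDegree_X_add_C, mul_one]

theorem hp_ne_zero (k : ℕ) (hk : 0 < k) (c : Fq) : hp k c ≠ 0 := fun h => by
  have := hp_natDegree k hk c
  rw [h, natDegree_zero] at this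
  omega

theorem reflect_hp (k : ℕ) (hk : 0 < k) (c : Fq) :
    reflect k (hp k c) = Polynomial.X ^ k - (1 + Polynomial.C c * Polynomial.X) ^ k := by
  rw [hp, reflect_sub]
  congr 1
  · rw [← Polynomial.C_1, reflect_C, map_one, one_mul]
  · have hrp := reflect_pow' ((Polynomial.X : Fq[X]) + Polynomial.C c) 1 k
      (by rw [Polynomial.natDegree_X_add_C])
    rw [mul_one] at hrp
    rw [hrp, reflect_add]
    congr 2
    · rw [← pow_one (Polynomial.X : Fq[X]), reflect_monomial, revAt_le (le_refl 1),
        Nat.sub_self, pow_zero]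
    · rw [reflect_C, pow_one]

/-- the numerator-like polynomial `A`. -/
noncomputable def Ap (Fq : Type*) [Field Fq] [Fintype Fq] [DecidableEq Fq] (k : ℕ) : Fq[X] :=
  ∑ c : Fq, ∏ b ∈ univ.erase c, hp k b

variable [DecidableEq Fq]

theorem natDegree_prod_erase (hcard : Fintype.card Fq = 4) (k : ℕ) (hk : 0 < k) (c : Fq) :
    (∏ b ∈ univ.erase c, hp k b).natDegree = 3 * k := by
  rw [Polynomial.natDegree_prod _ _ fun b _ => hp_ne_zero k hk b]
  rw [Finset.sum_congr rfl fun b _ => hp_natDegree k hk b, Finset.sum_const, smul_eq_mul,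
    Finset.card_erase_of_mem (mem_univ c), card_univ, hcard]

theorem natDegree_Ap_le (hcard : Fintype.card Fq = 4) (k : ℕ) (hk : 0 < k) :
    (Ap Fq k).natDegree ≤ 3 * k := by
  refine Polynomial.natDegree_sum_le_of_forall_le _ _ fun c _ => ?_
  rw [natDegree_prod_erase hcard k hk c]

theorem Ahat_eq (hcard : Fintype.card Fq = 4) (k : ℕ) (hk : 0 < k) :
    ((reflect (3 * k) (Ap Fq k) : Fq[X]) : PowerSeries Fq)
      = (∏ b : Fq, hh k b) * (∑ c : Fq, (hh k c)⁻¹) := by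
  haveI := myCharP Fq hcard
  have hcoe : ∀ b : Fq, ((reflect k (hp k b) : Fq[X]) : PowerSeries Fq) = hh k b := by
    intro b
    rw [reflect_hp k hk b]
    push_cast
    rw [hh]
    congr 2
    rw [sub_eq_add_neg, ← neg_mul, ← map_neg, CharTwo.neg_eq]
  have step1 : reflect (3 * k) (Ap Fq k) = ∑ c : Fq, ∏ b ∈ univ.erase c, reflect k (hp k b) := by
    rw [Ap, reflect_sum']
    refine Finset.sum_congr rfl fun c _ => ?_
    have hc3 : (univ.erase c).card = 3 := by
      rw [Finset.card_erase_of_mem (mem_univ c), card_univ, hcard]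
    rw [← hc3, reflect_prod' k _ _ fun b _ => le_of_eq (hp_natDegree k hk b)]
  have hprod : ∀ c : Fq, (Polynomial.coeToPowerSeries.ringHom
      (∏ b ∈ univ.erase c, reflect k (hp k b)) : PowerSeries Fq)
      = ∏ b ∈ univ.erase c, hh k b := by
    intro c
    rw [map_prod]
    exact Finset.prod_congr rfl fun b _ => by
      rw [Polynomial.coeToPowerSeries.ringHom_apply, hcoe]
  rw [step1, ← Polynomial.coeToPowerSeries.ringHom_apply, map_sum,
    Finset.sum_congr rfl fun c _ => hprod c, Finset.mul_sum]
  refine Finset.sum_congr rfl fun c _ => ?_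
  apply mul_left_cancel₀ (hh_ne_zero k hk c)
  rw [Finset.mul_prod_erase _ _ (mem_univ c), ← mul_assoc,
    mul_comm (hh k c) (∏ b : Fq, hh k b), mul_assoc,
    PowerSeries.mul_inv_cancel _ (by rw [constantCoeff_hh k hk c]; simp), mul_one]
end APoly
section ACoeff
open Polynomial Finset
variable {Fq : Type*} [Field Fq] [Fintype Fq] [DecidableEq Fq]

theorem coeff_reflect_Ap_zero (hcard : Fintype.card Fq = 4) (k : ℕ) (hk : 0 < k) {i : ℕ}
    (hz : ∀ j, j ≤ i → PowerSeries.coeff j (∑ c : Fq, (hh k c)⁻¹) = 0) :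
    ∀ j, j ≤ i → (reflect (3 * k) (Ap Fq k)).coeff j = 0 := by
  intro j hj
  have h := congrArg (PowerSeries.coeff j) (Ahat_eq hcard k hk)
  rw [Polynomial.coeff_coe] at h
  rw [h, PowerSeries.coeff_mul]
  refine Finset.sum_eq_zero fun p hp => ?_
  rw [Finset.HasAntidiagonal.mem_antidiagonal] at hp
  rw [hz p.2 (by omega), mul_zero]

theorem coeff_reflect_Ap_ne (hcard : Fintype.card Fq = 4) (k : ℕ) (hk : 0 < k) {i₀ : ℕ}
    (hz : ∀ j, j < i₀ → PowerSeries.coeff j (∑ c : Fq, (hh k c)⁻¹) = 0)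
    (hne : PowerSeries.coeff i₀ (∑ c : Fq, (hh k c)⁻¹) ≠ 0) :
    (reflect (3 * k) (Ap Fq k)).coeff i₀ ≠ 0 := by
  have h := congrArg (PowerSeries.coeff i₀) (Ahat_eq hcard k hk)
  rw [Polynomial.coeff_coe] at h
  rw [h, PowerSeries.coeff_mul]
  have hsingle : ∑ p ∈ Finset.HasAntidiagonal.antidiagonal i₀,
      PowerSeries.coeff p.1 (∏ b : Fq, hh k b) * PowerSeries.coeff p.2 (∑ c : Fq, (hh k c)⁻¹)
      = PowerSeries.coeff 0 (∏ b : Fq, hh k b) * PowerSeries.coeff i₀ (∑ c : Fq, (hh k c)⁻¹) := by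
    refine Finset.sum_eq_single ((0 : ℕ), i₀) (fun p hp hpne => ?_) (fun habs => ?_)
    · rw [Finset.HasAntidiagonal.mem_antidiagonal] at hp
      have h2 : p.2 < i₀ := by
        rcases Nat.lt_or_ge p.2 i₀ with h' | h'
        · exact h'
        · exfalso; apply hpne
          have : p.2 = i₀ := by omega
          have : p.1 = 0 := by omega
          exact Prod.ext this ‹p.2 = i₀›
      rw [hz p.2 h2, mul_zero]
    · exact absurd (Finset.HasAntidiagonal.mem_antidiagonal.2 (by simp)) habs
  rw [hsingle]
  refine mul_ne_zero ?_ hne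
  rw [PowerSeries.coeff_zero_eq_constantCoeff, map_prod]
  refine Finset.prod_ne_zero_iff.2 fun b _ => ?_
  rw [constantCoeff_hh k hk b]
  simp

theorem Ap_spec (hcard : Fintype.card Fq = 4) (k : ℕ) (hk : 0 < k) {i₀ : ℕ} (h3 : i₀ ≤ 3 * k)
    (hzero : ∀ j, j < i₀ → (reflect (3 * k) (Ap Fq k)).coeff j = 0)
    (hne : (reflect (3 * k) (Ap Fq k)).coeff i₀ ≠ 0) :
    Ap Fq k ≠ 0 ∧ (Ap Fq k).natDegree = 3 * k - i₀ := by
  have hrc : ∀ j, j ≤ 3 * k → (reflect (3 * k) (Ap Fq k)).coeff j = (Ap Fq k).coeff (3 * k - j) := by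
    intro j hj
    rw [coeff_reflect, revAt_le hj]
  have hAcoeff : (Ap Fq k).coeff (3 * k - i₀) ≠ 0 := by
    rw [← hrc i₀ h3]; exact hne
  have hAne : Ap Fq k ≠ 0 := fun h => hAcoeff (by rw [h, coeff_zero])
  refine ⟨hAne, le_antisymm ?_ (le_natDegree_of_ne_zero hAcoeff)⟩
  rw [natDegree_le_iff_coeff_eq_zero]
  intro N hN
  rcases Nat.lt_or_ge (3 * k) N with h' | h'
  · exact coeff_eq_zero_of_natDegree_lt (lt_of_le_of_lt (natDegree_Ap_le hcard k hk) h')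
  · have hco := hrc (3 * k - N) (by omega)
    rw [show 3 * k - (3 * k - N) = N by omega] at hco
    rw [← hco]
    exact hzero _ (by omega)

theorem Ap_deg_le (hcard : Fintype.card Fq = 4) (k : ℕ) (hk : 0 < k) {i : ℕ} (hi : i < 3 * k)
    (hall : ∀ j, j ≤ i → (reflect (3 * k) (Ap Fq k)).coeff j = 0) :
    (Ap Fq k).natDegree ≤ 3 * k - i - 1 := by
  rw [natDegree_le_iff_coeff_eq_zero]
  intro N hN
  rcases Nat.lt_or_ge (3 * k) N with h' | h'
  · exact coeff_eq_zero_of_natDegree_lt (lt_of_le_of_lt (natDegree_Ap_le hcard k hk) h')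
  · have hco : (reflect (3 * k) (Ap Fq k)).coeff (3 * k - N) = (Ap Fq k).coeff N := by
      rw [coeff_reflect, revAt_le (by omega), show 3 * k - (3 * k - N) = N by omega]
    rw [← hco]
    exact hall _ (by omega)
end ACoeff

section RatFuncPart
open Polynomial Finset
variable {Fq : Type*} [Field Fq] [Fintype Fq] [DecidableEq Fq]

theorem deg1_set_eq :
    {P : Polynomial Fq | P.Monic ∧ Irreducible P ∧ P.natDegree = 1}
      = ↑((univ : Finset Fq).image fun c => Polynomial.X + Polynomial.C c) := by
  ext P
  simp only [Set.mem_setOf_eq, Finset.coe_image, Set.mem_image, Finset.mem_coe, Finset.coe_univ,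
    Set.image_univ, Set.mem_range]
  constructor
  · rintro ⟨hm, _, hd⟩
    exact ⟨P.coeff 0, (hm.eq_X_add_C hd).symm⟩
  · rintro ⟨c, rfl⟩
    refine ⟨monic_X_add_C c, ?_, natDegree_X_add_C c⟩
    have := Polynomial.irreducible_X_sub_C (-c)
    rwa [map_neg, sub_neg_eq_add] at this

theorem Pd_one_eq (k : ℕ) :
    Pd Fq 1 k = ∑ c : Fq, (algebraMap (Polynomial Fq) (RatFunc Fq) (hp k c))⁻¹ := by
  rw [Pd, deg1_set_eq, finsum_mem_coe_finset, Finset.sum_image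
    (fun c _ d _ h => by simpa using (add_right_injective _ h : _))]
  refine Finset.sum_congr rfl fun c _ => ?_
  rw [hp, map_sub, map_one, map_pow]

theorem Pd_one_eq' (hcard : Fintype.card Fq = 4) (k : ℕ) (hk : 0 < k) :
    Pd Fq 1 k = algebraMap (Polynomial Fq) (RatFunc Fq) (Ap Fq k)
      * (algebraMap (Polynomial Fq) (RatFunc Fq) (∏ b : Fq, hp k b))⁻¹ := by
  rw [Pd_one_eq k, Ap, map_sum, Finset.sum_mul]
  refine Finset.sum_congr rfl fun c _ => ?_
  have hBeq : algebraMap (Polynomial Fq) (RatFunc Fq) (∏ b : Fq, hp k b)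
      = algebraMap (Polynomial Fq) (RatFunc Fq) (hp k c)
        * algebraMap (Polynomial Fq) (RatFunc Fq) (∏ b ∈ univ.erase c, hp k b) := by
    rw [← map_mul, Finset.mul_prod_erase _ _ (mem_univ c)]
  have he : algebraMap (Polynomial Fq) (RatFunc Fq) (∏ b ∈ univ.erase c, hp k b) ≠ 0 :=
    RatFunc.algebraMap_ne_zero (Finset.prod_ne_zero_iff.2 fun b _ => hp_ne_zero k hk b)
  have ha : algebraMap (Polynomial Fq) (RatFunc Fq) (hp k c) ≠ 0 :=
    RatFunc.algebraMap_ne_zero (hp_ne_zero k hk c)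
  rw [hBeq, mul_inv]
  field_simp

theorem RatFunc.intDegree_inv' (x : RatFunc Fq) (hx : x ≠ 0) : x⁻¹.intDegree = -x.intDegree := by
  have h := RatFunc.intDegree_mul (inv_ne_zero hx) hx
  rw [inv_mul_cancel₀ hx, RatFunc.intDegree_one] at h
  omega

theorem natDegree_B (hcard : Fintype.card Fq = 4) (k : ℕ) (hk : 0 < k) :
    (∏ b : Fq, hp k b).natDegree = 4 * k := by
  rw [Polynomial.natDegree_prod _ _ fun b _ => hp_ne_zero k hk b,
    Finset.sum_congr rfl fun b _ => hp_natDegree k hk b, Finset.sum_const, smul_eq_mul,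
    card_univ, hcard]

theorem Pd_zero_iff (hcard : Fintype.card Fq = 4) (k : ℕ) (hk : 0 < k) :
    Pd Fq 1 k = 0 ↔ Ap Fq k = 0 := by
  rw [Pd_one_eq' hcard k hk]
  have hB : algebraMap (Polynomial Fq) (RatFunc Fq) (∏ b : Fq, hp k b) ≠ 0 :=
    RatFunc.algebraMap_ne_zero (Finset.prod_ne_zero_iff.2 fun b _ => hp_ne_zero k hk b)
  rw [mul_eq_zero]
  simp only [inv_eq_zero, hB, or_false]
  exact ⟨fun h => (FaithfulSMul.algebraMap_eq_zero_iff _ _).1 h,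
    fun h => by rw [h, map_zero]⟩

theorem intDegree_Pd (hcard : Fintype.card Fq = 4) (k : ℕ) (hk : 0 < k) (hA : Ap Fq k ≠ 0) :
    (Pd Fq 1 k).intDegree = ((Ap Fq k).natDegree : ℤ) - 4 * k := by
  have hB : algebraMap (Polynomial Fq) (RatFunc Fq) (∏ b : Fq, hp k b) ≠ 0 :=
    RatFunc.algebraMap_ne_zero (Finset.prod_ne_zero_iff.2 fun b _ => hp_ne_zero k hk b)
  have hAϕ : algebraMap (Polynomial Fq) (RatFunc Fq) (Ap Fq k) ≠ 0 :=
    RatFunc.algebraMap_ne_zero hA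
  rw [Pd_one_eq' hcard k hk, RatFunc.intDegree_mul hAϕ (inv_ne_zero hB),
    RatFunc.intDegree_inv' _ hB, RatFunc.intDegree_polynomial, RatFunc.intDegree_polynomial,
    natDegree_B hcard k hk]
  push_cast
  ring
end RatFuncPart
section KThree
open Polynomial Finset
variable {Fq : Type*} [Field Fq] [Fintype Fq] [DecidableEq Fq]

theorem Pd_three (hcard : Fintype.card Fq = 4) : Pd Fq 1 3 = 0 := by
  haveI := myCharP Fq hcard
  rw [Pd_one_eq 3]
  have hXne : (Polynomial.X - Polynomial.X ^ 4 : Fq[X]) ≠ 0 := by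
    intro h
    have := congrArg (fun p : Fq[X] => p.coeff 4) h
    simp [Polynomial.coeff_X, Polynomial.coeff_X_pow] at this
  have key : ∀ c : Fq, hp 3 c * (Polynomial.X + Polynomial.C c)
      = Polynomial.X - Polynomial.X ^ 4 := by
    intro c
    have hc4 : c ^ 4 = c := by rw [← hcard]; exact FiniteField.pow_card c
    have h4 : (Polynomial.X + Polynomial.C c) ^ 4
        = Polynomial.X ^ 4 + Polynomial.C c := by
      have hch := add_pow_char_pow (Polynomial.X : Fq[X]) (Polynomial.C c) 2 2
      norm_num at hch
      rw [hch, ← map_pow, hc4]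
    calc hp 3 c * (Polynomial.X + Polynomial.C c)
        = (Polynomial.X + Polynomial.C c) - (Polynomial.X + Polynomial.C c) ^ 4 := by
          rw [hp]; ring
      _ = Polynomial.X - Polynomial.X ^ 4 := by rw [h4]; ring
  have hterm : ∀ c : Fq, (algebraMap (Polynomial Fq) (RatFunc Fq) (hp 3 c))⁻¹
      = algebraMap (Polynomial Fq) (RatFunc Fq) (Polynomial.X + Polynomial.C c)
        * (algebraMap (Polynomial Fq) (RatFunc Fq) (Polynomial.X - Polynomial.X ^ 4))⁻¹ := by
    intro c
    have hmul : algebraMap (Polynomial Fq) (RatFunc Fq) (hp 3 c)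
        * algebraMap (Polynomial Fq) (RatFunc Fq) (Polynomial.X + Polynomial.C c)
        = algebraMap (Polynomial Fq) (RatFunc Fq) (Polynomial.X - Polynomial.X ^ 4) := by
      rw [← map_mul, key c]
    have hhne : algebraMap (Polynomial Fq) (RatFunc Fq) (hp 3 c) ≠ 0 :=
      RatFunc.algebraMap_ne_zero (hp_ne_zero 3 (by norm_num) c)
    have hlne : algebraMap (Polynomial Fq) (RatFunc Fq) (Polynomial.X + Polynomial.C c) ≠ 0 :=
      RatFunc.algebraMap_ne_zero (Polynomial.X_add_C_ne_zero c)
    rw [← hmul, mul_inv, ← mul_assoc,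
      mul_comm (algebraMap (Polynomial Fq) (RatFunc Fq) (Polynomial.X + Polynomial.C c))
        ((algebraMap (Polynomial Fq) (RatFunc Fq) (hp 3 c))⁻¹),
      mul_assoc, mul_inv_cancel₀ hlne, mul_one]
  rw [Finset.sum_congr rfl fun c _ => hterm c, ← Finset.sum_mul, ← map_sum]
  have hsum : (∑ c : Fq, (Polynomial.X + Polynomial.C c) : Fq[X]) = 0 := by
    rw [Finset.sum_add_distrib, Finset.sum_const, card_univ, hcard, ← map_sum]
    have h1 : (∑ c : Fq, c) = 0 := by
      have := sum_pow_eq Fq hcard 1 one_ne_zero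
      simpa using this
    rw [h1, map_zero, add_zero, nsmul_eq_mul]
    have h4 : ((4 : ℕ) : Fq[X]) = 0 := by
      have h0 : ((4 : ℕ) : Fq) = 0 := by
        have := FiniteField.cast_card_eq_zero Fq
        rwa [hcard] at this
      rw [← Polynomial.C_eq_natCast, h0, map_zero]
    rw [h4, zero_mul]
  rw [hsum, map_zero, zero_mul]
end KThree

theorem choose_step (n i r : ℕ) (hi : i < 2 ^ r) :
    (n + 2 ^ r).choose i ≡ n.choose i [MOD 2] := by
  have hcp : CharP (Polynomial (ZMod 2)) 2 := inferInstance
  have key : ((X + 1 : Polynomial (ZMod 2)) ^ (n + 2 ^ r)).coeff i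
      = ((X + 1 : Polynomial (ZMod 2)) ^ n).coeff i := by
    rw [pow_add, add_pow_char_pow, one_pow, mul_add, mul_one, coeff_add,
      coeff_mul_X_pow', if_neg (by omega)]
    simp
  rw [coeff_X_add_one_pow, coeff_X_add_one_pow] at key
  exact (ZMod.natCast_eq_natCast_iff _ _ _).1 key

theorem choose_period (i r : ℕ) (hi : i < 2 ^ r) (n : ℕ) :
    n.choose i ≡ (n % 2 ^ r).choose i [MOD 2] := by
  induction n using Nat.strong_induction_on with
  | _ n ih =>
    rcases lt_or_ge n (2 ^ r) with h | h
    · rw [Nat.mod_eq_of_lt h]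
    · have hpos : 0 < 2 ^ r := Nat.pow_pos (by norm_num)
      have e : n = (n - 2 ^ r) + 2 ^ r := by omega
      have h1 : n.choose i ≡ (n - 2 ^ r).choose i [MOD 2] := by
        conv_lhs => rw [e]
        exact choose_step _ _ _ hi
      have h2 := ih (n - 2 ^ r) (by omega)
      rw [Nat.mod_eq_sub_mod h]
      exact h1.trans h2

theorem par3 (k : ℕ) (h : k % 4 = 1) : (k + 2).choose 3 % 2 = 1 := by
  have hp := choose_period 3 2 (by norm_num) (k + 2)
  have e : (k + 2) % 2 ^ 2 = 3 := by omega
  rw [Nat.ModEq, e] at hp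
  simpa using hp

theorem par3' (k : ℕ) (h : k % 4 = 3) : (k + 2).choose 3 % 2 = 0 := by
  have hp := choose_period 3 2 (by norm_num) (k + 2)
  have e : (k + 2) % 2 ^ 2 = 1 := by omega
  rw [Nat.ModEq, e] at hp
  simpa [Nat.choose] using hp

theorem par6 (k : ℕ) (h : k % 4 = 3) : (k + 5).choose 6 % 2 = 0 := by
  have hp := choose_period 6 3 (by norm_num) (k + 5)
  have e : (k + 5) % 2 ^ 3 = 0 ∨ (k + 5) % 2 ^ 3 = 4 := by omega
  rcases e with e | e <;> rw [Nat.ModEq, e] at hp <;> simpa [Nat.choose] using hp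

theorem par9 (k : ℕ) (h : k % 16 = 3 ∨ k % 16 = 7) : (k + 8).choose 9 % 2 = 1 := by
  have hp := choose_period 9 4 (by norm_num) (k + 8)
  have e : (k + 8) % 2 ^ 4 = 11 ∨ (k + 8) % 2 ^ 4 = 15 := by omega
  rcases e with e | e <;> rw [Nat.ModEq, e] at hp
  · have : Nat.choose 11 9 = 55 := by decide
    rw [this] at hp; simpa using hp
  · have : Nat.choose 15 9 = 5005 := by decide
    rw [this] at hp; simpa using hp

theorem par9' (k : ℕ) (h : k % 16 = 11 ∨ k % 16 = 15) : (k + 8).choose 9 % 2 = 0 := by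
  have hp := choose_period 9 4 (by norm_num) (k + 8)
  have e : (k + 8) % 2 ^ 4 = 3 ∨ (k + 8) % 2 ^ 4 = 7 := by omega
  rcases e with e | e <;> rw [Nat.ModEq, e] at hp <;> simpa [Nat.choose] using hp
section Assembly
open Polynomial Finset
variable {Fq : Type*} [Field Fq] [Fintype Fq] [DecidableEq Fq]

theorem cast_parity (hcard : Fintype.card Fq = 4) (m : ℕ) :
    ((m : Fq) = if m % 2 = 1 then 1 else 0) := by
  haveI := myCharP Fq hcard
  have h2 : (2 : Fq) = 0 := by exact_mod_cast CharP.cast_eq_zero Fq 2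
  conv_lhs => rw [← Nat.div_add_mod m 2]
  push_cast
  rw [h2, zero_mul, zero_add]
  rcases Nat.mod_two_eq_zero_or_one m with h | h <;> rw [h] <;> simp

theorem pos_case (hcard : Fintype.card Fq = 4) (k : ℕ) (hk0 : 0 < k) (i₀ : ℕ)
    (hi₀k : i₀ < k) (h3 : 3 ∣ i₀) (hipos : 0 < i₀)
    (hoddc : ((k - 1 + i₀).choose (k - 1)) % 2 = 1)
    (hsmall : ∀ j, 0 < j → j < i₀ → 3 ∣ j → ((k - 1 + j).choose (k - 1)) % 2 = 0) :
    Pd Fq 1 k ≠ 0 ∧ (Pd Fq 1 k).intDegree = ((3 * k - i₀ : ℕ) : ℤ) - 4 * k := by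
  have hz : ∀ j, j < i₀ → PowerSeries.coeff j (∑ c : Fq, (hh k c)⁻¹) = 0 := by
    intro j hj
    rw [coeff_H hcard k hk0 j (by omega)]
    split
    · next hcond =>
      rw [cast_parity hcard, if_neg (by rw [hsmall j (Nat.pos_of_ne_zero hcond.2) hj hcond.1]; omega)]
    · rfl
  have hne : PowerSeries.coeff i₀ (∑ c : Fq, (hh k c)⁻¹) ≠ 0 := by
    rw [coeff_H hcard k hk0 i₀ hi₀k, if_pos ⟨h3, hipos.ne'⟩, cast_parity hcard, if_pos hoddc]
    exact one_ne_zero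
  have hrne := coeff_reflect_Ap_ne hcard k hk0 hz hne
  have hrz := coeff_reflect_Ap_zero hcard k hk0 (i := i₀ - 1) (fun j hj => hz j (by omega))
  have hspec := Ap_spec hcard k hk0 (i₀ := i₀) (by omega)
    (fun j hj => hrz j (by omega)) hrne
  refine ⟨fun h => hspec.1 ((Pd_zero_iff hcard k hk0).1 h), ?_⟩
  rw [intDegree_Pd hcard k hk0 hspec.1, hspec.2]

theorem neg_case (hcard : Fintype.card Fq = 4) (k : ℕ) (hk9 : 9 < k)
    (hsmall : ∀ j, 0 < j → j ≤ 9 → 3 ∣ j → ((k - 1 + j).choose (k - 1)) % 2 = 0) :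
    Pd Fq 1 k = 0 ∨ (Pd Fq 1 k).intDegree ≤ -((k : ℤ) + 10) := by
  have hk0 : 0 < k := by omega
  have hz : ∀ j, j ≤ 9 → PowerSeries.coeff j (∑ c : Fq, (hh k c)⁻¹) = 0 := by
    intro j hj
    rw [coeff_H hcard k hk0 j (by omega)]
    split
    · next hcond =>
      rw [cast_parity hcard, if_neg (by rw [hsmall j (Nat.pos_of_ne_zero hcond.2) hj hcond.1]; omega)]
    · rfl
  have hrz := coeff_reflect_Ap_zero hcard k hk0 (i := 9) (fun j hj => hz j hj)
  by_cases hA : Ap Fq k = 0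
  · exact Or.inl ((Pd_zero_iff hcard k hk0).2 hA)
  · right
    have hdeg := Ap_deg_le hcard k hk0 (i := 9) (by omega) hrz
    rw [intDegree_Pd hcard k hk0 hA]
    have : ((Ap Fq k).natDegree : ℤ) ≤ (3 * k - 10 : ℤ) := by
      have := hdeg
      omega
    omega

theorem choose_shift (k j : ℕ) (hk : 0 < k) (hj : 0 < j) :
    (k - 1 + j).choose (k - 1) = (k + (j - 1)).choose j := by
  have e1 : k - 1 + j = k + (j - 1) := by omega
  rw [e1, ← Nat.choose_symm (show j ≤ k + (j - 1) by omega),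
    show k + (j - 1) - j = k - 1 by omega]

theorem part1 (Fq : Type*) [Field Fq] [Fintype Fq] [DecidableEq Fq]
    (hcard : Fintype.card Fq = 4)
    (k : ℕ) (hk0 : 0 < k) (hodd : Odd k) (hdvd : 3 ∣ k)
    (M : ℕ) (hM : IsLeast {m : ℕ | 12 ∣ m ∧ k < m} M) :
    (Pd Fq 1 k ≠ 0 ∧ -(Pd Fq 1 k).intDegree = (M : ℤ)) ↔
      (3 < k ∧ (k % 4 = 1 ∨ k % 16 = 3 ∨ k % 16 = 7)) := by
  have hk2 : k % 2 = 1 := Nat.odd_iff.1 hodd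
  obtain ⟨⟨hM12, hMk⟩, hMle⟩ := hM
  rcases (show k % 4 = 1 ∨ k % 4 = 3 by omega) with h4 | h4
  · -- k ≡ 1 mod 4, positive case with i₀ = 3
    have hk3 : 3 < k := by omega
    have hModd : M = k + 3 := by
      have := hMle (show (k + 3) ∈ {m : ℕ | 12 ∣ m ∧ k < m} from ⟨by omega, by omega⟩)
      omega
    have hpar : ((k - 1 + 3).choose (k - 1)) % 2 = 1 := by
      rw [choose_shift k 3 hk0 (by omega)]
      exact par3 k h4
    have hpos := pos_case hcard k hk0 3 (by omega) (by omega) (by omega) hpar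
      (fun j hj1 hj2 hj3 => by omega)
    refine iff_of_true ⟨hpos.1, ?_⟩ ⟨hk3, Or.inl h4⟩
    rw [hpos.2, hModd]
    have : ((3 * k - 3 : ℕ) : ℤ) = 3 * k - 3 := by
      have : 3 ≤ 3 * k := by omega
      omega
    rw [this]
    push_cast
    ring
  · rcases eq_or_ne k 3 with rfl | hk3
    · refine iff_of_false (fun h => h.1 (Pd_three hcard)) (fun h => by omega)
    · have hk15 : 15 ≤ k := by omega
      have hModd : M = k + 9 := by
        have := hMle (show (k + 9) ∈ {m : ℕ | 12 ∣ m ∧ k < m} from ⟨by omega, by omega⟩)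
        omega
      have hpar3 : ((k - 1 + 3).choose (k - 1)) % 2 = 0 := by
        rw [choose_shift k 3 hk0 (by omega)]
        exact par3' k h4
      have hpar6 : ((k - 1 + 6).choose (k - 1)) % 2 = 0 := by
        rw [choose_shift k 6 hk0 (by omega)]
        exact par6 k h4
      rcases (show k % 16 = 3 ∨ k % 16 = 7 ∨ k % 16 = 11 ∨ k % 16 = 15 by omega) with
        h16 | h16 | h16 | h16
      case _ | _ =>
        -- positive, i₀ = 9
        have hpar9 : ((k - 1 + 9).choose (k - 1)) % 2 = 1 := by
          rw [choose_shift k 9 hk0 (by omega)]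
          exact par9 k (by omega)
        have hsmall : ∀ j, 0 < j → j < 9 → 3 ∣ j → ((k - 1 + j).choose (k - 1)) % 2 = 0 := by
          intro j hj1 hj2 hj3
          rcases (show j = 3 ∨ j = 6 by omega) with rfl | rfl
          · exact hpar3
          · exact hpar6
        have hpos := pos_case hcard k hk0 9 (by omega) (by omega) (by omega) hpar9 hsmall
        refine iff_of_true ⟨hpos.1, ?_⟩ ⟨by omega, by omega⟩
        rw [hpos.2, hModd]
        have : ((3 * k - 9 : ℕ) : ℤ) = 3 * k - 9 := by omega
        rw [this]
        push_cast
        ring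
      case _ | _ =>
        -- negative
        have hpar9 : ((k - 1 + 9).choose (k - 1)) % 2 = 0 := by
          rw [choose_shift k 9 hk0 (by omega)]
          exact par9' k (by omega)
        have hsmall : ∀ j, 0 < j → j ≤ 9 → 3 ∣ j → ((k - 1 + j).choose (k - 1)) % 2 = 0 := by
          intro j hj1 hj2 hj3
          rcases (show j = 3 ∨ j = 6 ∨ j = 9 by omega) with rfl | rfl | rfl
          · exact hpar3
          · exact hpar6
          · exact hpar9
        refine iff_of_false ?_ (by omega)
        rintro ⟨hne, hdeg⟩
        rcases neg_case hcard k (by omega) hsmall with h | h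
        · exact hne h
        · rw [hModd] at hdeg
          push_cast at hdeg
          omega
end Assembly
section Part2
open Polynomial Finset FunctionField
variable {Fq : Type*} [Field Fq] [Fintype Fq]

instance : CompleteSpace (RatFunc.CompletionAtInfty Fq) :=
  @UniformSpace.Completion.completeSpace (RatFunc Fq) (RatFunc.inftyValued Fq).toUniformSpace

instance : NonarchimedeanAddGroup (RatFunc.CompletionAtInfty Fq) where
  is_nonarchimedean := by
    intro U hU
    obtain ⟨γ, hγ⟩ := Valued.mem_nhds_zero.1 hU
    have hopen : IsOpen ((Valued.v.restrict.ltAddSubgroup γ : AddSubgroup (RatFunc.CompletionAtInfty Fq)) :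
        Set (RatFunc.CompletionAtInfty Fq)) := by
      apply AddSubgroup.isOpen_of_mem_nhds
      rw [Valued.mem_nhds_zero]
      exact ⟨γ, fun x hx => hx⟩
    exact ⟨⟨Valued.v.restrict.ltAddSubgroup γ, hopen⟩, hγ⟩

theorem prime_deg_pos {P : Polynomial Fq} (hm : P.Monic) (hi : Irreducible P) :
    0 < P.natDegree := by
  rcases Nat.eq_zero_or_pos P.natDegree with h | h
  · exfalso
    rw [Polynomial.Monic.natDegree_eq_zero hm] at h
    exact not_irreducible_one (h ▸ hi)
  · exact h

theorem one_sub_pow_ne_zero {P : Polynomial Fq} (hm : P.Monic) (hi : Irreducible P) (k : ℕ)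
    (hk : 0 < k) : (1 - P ^ k : Polynomial Fq) ≠ 0 := by
  intro h
  have h1 : (P : Polynomial Fq) ^ k = 1 := by linear_combination -h
  have := congrArg Polynomial.natDegree h1
  rw [Polynomial.natDegree_pow, Polynomial.natDegree_one] at this
  have := prime_deg_pos hm hi
  nlinarith

theorem natDegree_one_sub_pow {P : Polynomial Fq} (k : ℕ) :
    (1 - P ^ k : Polynomial Fq).natDegree = k * P.natDegree := by
  rw [← Polynomial.natDegree_neg, neg_sub, ← Polynomial.C_1, Polynomial.natDegree_sub_C,
    Polynomial.natDegree_pow]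

/-- valuation of a term -/
theorem term_val {P : Polynomial Fq} (hm : P.Monic) (hi : Irreducible P) (k : ℕ) (hk : 0 < k) :
    (RatFunc.inftyValued Fq).v
        (((1 : RatFunc Fq) - algebraMap (Polynomial Fq) (RatFunc Fq) P ^ k)⁻¹ : RatFunc Fq)
      = ((Multiplicative.ofAdd (-(k * P.natDegree : ℤ)) : Multiplicative ℤ) :
          WithZero (Multiplicative ℤ)) := by
  have he : (1 : RatFunc Fq) - algebraMap (Polynomial Fq) (RatFunc Fq) P ^ k
      = algebraMap (Polynomial Fq) (RatFunc Fq) (1 - P ^ k) := by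
    rw [map_sub, map_one, map_pow]
  rw [he, map_inv₀, RatFunc.inftyValued.def,
    RatFunc.inftyValuation.polynomial Fq (one_sub_pow_ne_zero hm hi k hk),
    natDegree_one_sub_pow]
  unfold WithZero.exp
  rw [← WithZero.coe_inv, ← ofAdd_neg]
  push_cast
  ring_nf

theorem term_val' {P : Polynomial Fq} (hm : P.Monic) (hi : Irreducible P) (k : ℕ) (hk : 0 < k) :
    Valued.v (toInfty (((1 : RatFunc Fq)
        - algebraMap (Polynomial Fq) (RatFunc Fq) P ^ k)⁻¹ : RatFunc Fq))
      = ((Multiplicative.ofAdd (-(k * P.natDegree : ℤ)) : Multiplicative ℤ) :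
          WithZero (Multiplicative ℤ)) := by
  have hv : Valued.v (toInfty (((1 : RatFunc Fq)
        - algebraMap (Polynomial Fq) (RatFunc Fq) P ^ k)⁻¹ : RatFunc Fq))
      = (RatFunc.inftyValued Fq).v
        (((1 : RatFunc Fq) - algebraMap (Polynomial Fq) (RatFunc Fq) P ^ k)⁻¹ : RatFunc Fq) :=
    @Valued.valuedCompletion_apply (RatFunc Fq) _ _ _ (RatFunc.inftyValued Fq) _
  rw [hv, term_val hm hi k hk]

theorem finite_small_deg (D : ℕ) :
    {℘ : {P : Polynomial Fq // P.Monic ∧ Irreducible P} | ℘.1.natDegree ≤ D}.Finite := by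
  have hinj : Set.InjOn
      (fun ℘ : {P : Polynomial Fq // P.Monic ∧ Irreducible P} =>
        (fun i : Fin (D + 1) => ℘.1.coeff i))
      {℘ : {P : Polynomial Fq // P.Monic ∧ Irreducible P} | ℘.1.natDegree ≤ D} := by
    intro p hp q hq h
    have hp' : p.1.natDegree ≤ D := hp
    have hq' : q.1.natDegree ≤ D := hq
    apply Subtype.ext
    apply Polynomial.ext
    intro n
    rcases Nat.lt_or_ge n (D + 1) with hn | hn
    · exact congrFun h ⟨n, hn⟩
    · rw [Polynomial.coeff_eq_zero_of_natDegree_lt (by omega),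
        Polynomial.coeff_eq_zero_of_natDegree_lt (by omega)]
  exact Set.Finite.of_finite_image (Set.toFinite _) hinj

/-- terms tend to zero on cofinite -/
theorem terms_tendsto (k : ℕ) (hk : 0 < k) :
    Filter.Tendsto (fun ℘ : {P : Polynomial Fq // P.Monic ∧ Irreducible P} =>
      toInfty (1 - algebraMap (Polynomial Fq) (RatFunc Fq) ℘.1 ^ k)⁻¹)
      Filter.cofinite (nhds 0) := by
  intro s hs
  rw [Filter.mem_map, Filter.mem_cofinite]
  obtain ⟨γ₀, hγ₀⟩ := Valued.mem_nhds_zero.1 hs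
  obtain ⟨γ, hγ⟩ : ∃ γ : (WithZero (Multiplicative ℤ))ˣ,
      {x : RatFunc.CompletionAtInfty Fq | Valued.v x < (γ : WithZero (Multiplicative ℤ))} ⊆ s :=
    ⟨Units.mk0 (MonoidWithZeroHom.ValueGroup₀.embedding γ₀.1) (fun h => γ₀.ne_zero
      (MonoidWithZeroHom.ValueGroup₀.embedding_injective (h.trans (map_zero _).symm))),
      fun x hx => hγ₀ ((Valuation.restrict_lt_iff_lt_embedding _).2 hx)⟩
  set g : Multiplicative ℤ := WithZero.unzero γ.ne_zero with hg
  set D : ℕ := (Multiplicative.toAdd g).natAbs + 1 with hD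
  refine Set.Finite.subset (finite_small_deg D) ?_
  intro ℘ h℘
  by_contra hdeg
  simp only [Set.mem_setOf_eq, not_le] at hdeg
  apply h℘
  apply hγ
  show Valued.v _ < (γ : WithZero (Multiplicative ℤ))
  rw [term_val' ℘.2.1 ℘.2.2 k hk, ← WithZero.coe_unzero γ.ne_zero, WithZero.coe_lt_coe, ← hg,
    ← Multiplicative.toAdd_lt, toAdd_ofAdd]
  have h1 : D < ℘.1.natDegree := hdeg
  have h2 : (℘.1.natDegree : ℤ) ≤ (k : ℤ) * ℘.1.natDegree := by
    have : (1 : ℤ) ≤ k := by exact_mod_cast hk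
    nlinarith [Int.natCast_nonneg ℘.1.natDegree]
  omega

theorem summable_terms (k : ℕ) (hk : 0 < k) :
    Summable (fun ℘ : {P : Polynomial Fq // P.Monic ∧ Irreducible P} =>
      toInfty (1 - algebraMap (Polynomial Fq) (RatFunc Fq) ℘.1 ^ k)⁻¹) :=
  NonarchimedeanAddGroup.summable_of_tendsto_cofinite_zero (terms_tendsto k hk)
end Part2
section Part2b
open Polynomial Finset FunctionField
variable {Fq : Type*} [Field Fq] [Fintype Fq]

noncomputable def toInftyHom : RatFunc Fq →+ RatFunc.CompletionAtInfty Fq :=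
  letI := RatFunc.inftyValued Fq
  { toFun := toInfty
    map_zero' := UniformSpace.Completion.coe_zero
    map_add' := fun a b => UniformSpace.Completion.coe_add a b }

theorem tsum_val_le {ι : Type*} (f : ι → RatFunc.CompletionAtInfty Fq) (hf : Summable f)
    (δ : WithZero (Multiplicative ℤ)) (hterm : ∀ i, Valued.v (f i) ≤ δ) :
    Valued.v (∑' i, f i) ≤ δ := by
  set Sgrp : AddSubgroup (RatFunc.CompletionAtInfty Fq) :=
    { carrier := {x | Valued.v x ≤ δ}
      add_mem' := fun {a b} ha hb => le_trans (Valued.v.map_add a b) (max_le ha hb)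
      zero_mem' := by simp only [Set.mem_setOf_eq, map_zero]; exact zero_le'
      neg_mem' := fun {a} ha => by simpa only [Set.mem_setOf_eq, Valuation.map_neg] using ha }
  have hnotin : ∀ x : RatFunc.CompletionAtInfty Fq, x ∉ (Sgrp : Set (RatFunc.CompletionAtInfty Fq)) ↔ ¬ Valued.v x ≤ δ :=
    fun x => Iff.rfl
  have hclosed : IsClosed (Sgrp : Set (RatFunc.CompletionAtInfty Fq)) := by
    rw [← isOpen_compl_iff, isOpen_iff_mem_nhds]
    intro x hx
    rw [Set.mem_compl_iff, hnotin x, not_le] at hx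
    have hxv : Valued.v x ≠ 0 := fun h0 => by
      rw [h0] at hx
      exact absurd hx (not_lt.2 zero_le')
    filter_upwards [Valued.locally_const hxv] with y hy
    rw [Set.mem_compl_iff, hnotin y, not_le, Set.mem_setOf_eq.mp hy]
    exact hx
  have hmem : (∑' i, f i) ∈ (Sgrp : Set (RatFunc.CompletionAtInfty Fq)) := by
    refine hclosed.mem_of_tendsto hf.hasSum (Filter.Eventually.of_forall fun s => ?_)
    exact AddSubgroup.sum_mem Sgrp fun i _ => hterm i
  exact hmem
end Part2b
open Polynomial Finset FunctionField in
/-- (q = 4, k an odd positive multiple of 3, M the least multiple of 12 with M > k)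
`P_1(k) ≠ 0` with valuation at infinity `M` iff `k > 3` and (`k ≡ 1 [MOD 4]`, or
`k ≡ 3 [MOD 16]`, or `k ≡ 7 [MOD 16]`).  Moreover, when this condition holds, the family
`1/(1 - ℘^k)` over all monic irreducibles of `F_4[t]` is summable in `K_∞` and its sum has
valuation `M` at infinity (`Valued.v S = ofAdd (-M)`); in particular the sum is nonzero. -/
theorem stmt_16 (Fq : Type*) [Field Fq] [Fintype Fq] (hcard : Fintype.card Fq = 4)
    (k : ℕ) (hk0 : 0 < k) (hodd : Odd k) (hdvd : 3 ∣ k)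
    (M : ℕ) (hM : IsLeast {m : ℕ | 12 ∣ m ∧ k < m} M) :
    ((Pd Fq 1 k ≠ 0 ∧ -(Pd Fq 1 k).intDegree = (M : ℤ)) ↔
      (3 < k ∧ (k % 4 = 1 ∨ k % 16 = 3 ∨ k % 16 = 7))) ∧
    ((3 < k ∧ (k % 4 = 1 ∨ k % 16 = 3 ∨ k % 16 = 7)) →
      ∃ S : RatFunc.CompletionAtInfty Fq,
        HasSum (fun ℘ : {P : Polynomial Fq // P.Monic ∧ Irreducible P} =>
          toInfty (1 - algebraMap (Polynomial Fq) (RatFunc Fq) ℘.1 ^ k)⁻¹) S ∧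
        Valued.v S = ((Multiplicative.ofAdd (-(M : ℤ)) :
          Multiplicative ℤ) : WithZero (Multiplicative ℤ)) ∧
        S ≠ 0) := by
  letI : DecidableEq Fq := Classical.decEq Fq
  have hk2 : k % 2 = 1 := Nat.odd_iff.1 hodd
  refine ⟨part1 Fq hcard k hk0 hodd hdvd M hM, fun hcond => ?_⟩
  obtain ⟨⟨hM12, hMk⟩, hMle⟩ := hM
  -- M < 2k
  have hM2k : M < 2 * k := by
    by_cases h4 : k % 4 = 1
    · have := hMle (show (k + 3) ∈ {m : ℕ | 12 ∣ m ∧ k < m} from ⟨by omega, by omega⟩)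
      omega
    · have h4' : k % 4 = 3 := by omega
      have h15 : 15 ≤ k := by
        rcases hcond.2 with h | h | h <;> omega
      have := hMle (show (k + 9) ∈ {m : ℕ | 12 ∣ m ∧ k < m} from ⟨by omega, by omega⟩)
      omega
  obtain ⟨hPdne, hPddeg⟩ :=
    (part1 Fq hcard k hk0 hodd hdvd M ⟨⟨hM12, hMk⟩, hMle⟩).2 hcond
  have hirr : ∀ c : Fq, Irreducible (Polynomial.X + Polynomial.C c) := fun c => by
    have := Polynomial.irreducible_X_sub_C (-c)
    rwa [map_neg, sub_neg_eq_add] at this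
  set I' := {P : Polynomial Fq // P.Monic ∧ Irreducible P} with hI'
  set emb : Fq → I' := fun c =>
    ⟨Polynomial.X + Polynomial.C c, monic_X_add_C c, hirr c⟩ with hembdef
  have hembinj : ∀ c ∈ (univ : Finset Fq), ∀ d ∈ (univ : Finset Fq), emb c = emb d → c = d := by
    intro c _ d _ h
    have := congrArg Subtype.val h
    simp only [hembdef] at this
    have := add_left_cancel this
    exact Polynomial.C_injective this
  set T1 : Finset I' := (univ : Finset Fq).image emb with hT1
  set f : I' → RatFunc.CompletionAtInfty Fq :=
    fun ℘ => toInfty (1 - algebraMap (Polynomial Fq) (RatFunc Fq) ℘.1 ^ k)⁻¹ with hfdef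
  have hsummable : Summable f := summable_terms k hk0
  -- the finite part equals toInfty (Pd Fq 1 k)
  have hsumT1 : ∑ ℘ ∈ T1, f ℘ = toInfty (Pd Fq 1 k) := by
    rw [hT1, Finset.sum_image hembinj, Pd_one_eq k,
      show toInfty (∑ c : Fq, (algebraMap (Polynomial Fq) (RatFunc Fq) (hp k c))⁻¹)
        = ∑ c : Fq, toInfty ((algebraMap (Polynomial Fq) (RatFunc Fq) (hp k c))⁻¹)
        from map_sum (toInftyHom) _ _]
    refine Finset.sum_congr rfl fun c _ => ?_
    simp only [hfdef, hembdef]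
    congr 2
    rw [hp, map_sub, map_one, map_pow]
  have hvT1 : Valued.v (∑ ℘ ∈ T1, f ℘)
      = ((Multiplicative.ofAdd (-(M : ℤ)) : Multiplicative ℤ) :
          WithZero (Multiplicative ℤ)) := by
    rw [hsumT1]
    have hv : Valued.v (toInfty (Pd Fq 1 k)) = (RatFunc.inftyValued Fq).v (Pd Fq 1 k) :=
      @Valued.valuedCompletion_apply (RatFunc Fq) _ _ _ (RatFunc.inftyValued Fq) _
    rw [hv, RatFunc.inftyValued.def, RatFunc.inftyValuation_of_nonzero Fq hPdne,
      show (Pd Fq 1 k).intDegree = -(M : ℤ) by omega]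
    rfl
  -- the remainder
  set R : RatFunc.CompletionAtInfty Fq := ∑' x : {x : I' // x ∉ T1}, f x.1 with hRdef
  have hcompl : HasSum (fun x : {x : I' // x ∉ T1} => f x.1) R :=
    (hsummable.subtype _).hasSum
  have hS : HasSum f (R + ∑ ℘ ∈ T1, f ℘) := (T1.hasSum_compl_iff).1 hcompl
  have hvR : Valued.v R ≤ ((Multiplicative.ofAdd (-(2 * k : ℤ)) : Multiplicative ℤ) :
      WithZero (Multiplicative ℤ)) := by
    refine tsum_val_le _ (hsummable.subtype _) _ fun ℘ => ?_
    have hdeg2 : 2 ≤ ℘.1.1.natDegree := by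
      have h1 : 0 < ℘.1.1.natDegree := prime_deg_pos ℘.1.2.1 ℘.1.2.2
      rcases Nat.lt_or_ge ℘.1.1.natDegree 2 with h | h
      · exfalso
        have hd1 : ℘.1.1.natDegree = 1 := by omega
        apply ℘.2
        refine Finset.mem_image.2 ⟨℘.1.1.coeff 0, mem_univ _, ?_⟩
        apply Subtype.ext
        simp only [hembdef]
        exact (℘.1.2.1.eq_X_add_C hd1).symm
      · exact h
    show Valued.v (f ℘.1) ≤ _
    rw [hfdef]
    rw [term_val' ℘.1.2.1 ℘.1.2.2 k hk0, WithZero.coe_le_coe, ← Multiplicative.toAdd_le,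
      toAdd_ofAdd, toAdd_ofAdd]
    have : (2 : ℤ) * k ≤ (k : ℤ) * ℘.1.1.natDegree := by
      have h2 : (2 : ℤ) ≤ (℘.1.1.natDegree : ℤ) := by exact_mod_cast hdeg2
      have hk' : (1 : ℤ) ≤ (k : ℤ) := by exact_mod_cast hk0
      nlinarith
    omega
  have hvRlt : Valued.v R < Valued.v (∑ ℘ ∈ T1, f ℘) := by
    rw [hvT1]
    refine lt_of_le_of_lt hvR ?_
    rw [WithZero.coe_lt_coe, ← Multiplicative.toAdd_lt, toAdd_ofAdd, toAdd_ofAdd]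
    omega
  refine ⟨R + ∑ ℘ ∈ T1, f ℘, hS, ?_, ?_⟩
  · rw [Valued.v.map_add_eq_of_lt_right hvRlt, hvT1]
  · intro h0
    have := Valued.v.map_add_eq_of_lt_right hvRlt
    rw [h0, map_zero, hvT1] at this
    exact WithZero.coe_ne_zero this.symm
end

section
/- Let q = p^m be a prime power with m ≥ 2 (so q is not prime), let n ≥ 1, and let H ∈ ℤ[u] be the unique polynomial with p·H(u) = (1-u^p) - (1-u)^p. Then in F_q(t), the sum over all θ ∈ F_q of H((t+θ)^{-(q^n-1)}) / (1-(t+θ)^{-(q^n-1)})^p equals 0 (H evaluated after reducing its coefficients modulo p); that is, the degree-1 sum G_1(q^n-1) = Σ_{deg ℘ = 1} G_p(1/℘^{q^n-1}) vanishes. -/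
open Polynomial Finset

lemma sum_theta_pow {Fq : Type*} [Field Fq] [Fintype Fq] {R : Type*} [CommRing R]
    [Algebra Fq R] (a b : ℕ) (hab : a + b < Fintype.card Fq - 1) (A B : R) :
    ∑ θ : Fq, (A + algebraMap Fq R θ) ^ a * (B + algebraMap Fq R θ) ^ b = 0 := by
  set P : R[X] := (C A + X) ^ a * (C B + X) ^ b with hP
  have h1 : (C A + X).natDegree ≤ 1 :=
    le_trans (natDegree_add_le _ _) (by simp [natDegree_C, natDegree_X_le])
  have h2 : (C B + X).natDegree ≤ 1 :=
    le_trans (natDegree_add_le _ _) (by simp [natDegree_C, natDegree_X_le])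
  have hdeg : P.natDegree < a + b + 1 := by
    calc P.natDegree ≤ ((C A + X) ^ a).natDegree + ((C B + X) ^ b).natDegree :=
          natDegree_mul_le
      _ ≤ a * 1 + b * 1 :=
          add_le_add (natDegree_pow_le.trans (Nat.mul_le_mul_left a h1))
            (natDegree_pow_le.trans (Nat.mul_le_mul_left b h2))
      _ < a + b + 1 := by omega
  have key : ∀ θ : Fq, (A + algebraMap Fq R θ) ^ a * (B + algebraMap Fq R θ) ^ b
      = ∑ k ∈ Finset.range (a + b + 1), P.coeff k * (algebraMap Fq R θ) ^ k := by
    intro θ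
    have := Polynomial.eval_eq_sum_range' hdeg (algebraMap Fq R θ)
    simpa [hP] using this
  rw [Finset.sum_congr rfl fun θ _ => key θ, Finset.sum_comm]
  refine Finset.sum_eq_zero fun k hk => ?_
  rw [← Finset.mul_sum]
  have hz : ∑ θ : Fq, (algebraMap Fq R θ) ^ k = 0 := by
    simp_rw [← map_pow, ← map_sum]
    rw [FiniteField.sum_pow_lt_card_sub_one Fq k (by simp only [Finset.mem_range] at hk; omega), map_zero]
  rw [hz, mul_zero]

/-- (q = p^m, p prime, m ≥ 2, n ≥ 1) Let `H ∈ ℤ[u]` be the unique polynomial with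
`p·H(u) = (1 - u^p) - (1 - u)^p`.  Then in `F_q(t)`,
`Σ_{θ ∈ F_q} H((t+θ)^{-(q^n-1)}) / (1 - (t+θ)^{-(q^n-1)})^p = 0` (coefficients of `H`
reduced mod `p`); that is, the degree-1 sum `G_1(q^n - 1)` vanishes. -/
theorem stmt_19 (p m : ℕ) [Fact (Nat.Prime p)] (hm : 2 ≤ m)
    (Fq : Type*) [Field Fq] [Fintype Fq] (hcard : Fintype.card Fq = p ^ m)
    (n : ℕ) (hn : 1 ≤ n)
    (H : Polynomial ℤ)
    (hH : Polynomial.C (p : ℤ) * H = (1 - Polynomial.X ^ p) - (1 - Polynomial.X) ^ p) :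
    ∑ θ : Fq,
        (Polynomial.aeval ((RatFunc.X + RatFunc.C θ)⁻¹ ^ (Fintype.card Fq ^ n - 1))
            (H.map (Int.castRingHom Fq)) /
          (1 - (RatFunc.X + RatFunc.C θ)⁻¹ ^ (Fintype.card Fq ^ n - 1)) ^ p) =
      (0 : RatFunc Fq) := by
  have hp : Nat.Prime p := Fact.out
  -- char p
  haveI : CharP Fq (ringChar Fq) := ringChar.charP Fq
  obtain ⟨k, hrp, hck⟩ := FiniteField.card Fq (ringChar Fq)
  have hpr : p = ringChar Fq := by
    have hdvd : p ∣ (ringChar Fq) ^ (k : ℕ) := by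
      rw [← hck, hcard]
      exact dvd_pow_self p (by omega)
    exact ((Nat.prime_dvd_prime_iff_eq hp hrp).mp (hp.dvd_of_dvd_pow hdvd))
  haveI hcharFq : CharP Fq p := by rw [hpr]; infer_instance
  haveI : CharP (RatFunc Fq) p :=
    charP_of_injective_algebraMap (algebraMap Fq (RatFunc Fq)).injective p
  set q := Fintype.card Fq with hq
  set Q := q ^ n with hQdef
  set K := Q - 1 with hKdef
  have hq4 : 4 ≤ q := by
    have h1 : p ^ 2 ≤ p ^ m := Nat.pow_le_pow_right hp.pos hm
    have h2 : 2 ≤ p := hp.two_le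
    have : 4 ≤ p ^ 2 := by nlinarith
    omega
  have hQq : q ≤ Q := Nat.le_self_pow (by omega) q
  have hKQ : K + 1 = Q := by
    have : 1 ≤ Q := by omega
    omega
  have hpq : p < q - 1 := by
    have h1 : p ^ 2 ≤ p ^ m := Nat.pow_le_pow_right hp.pos hm
    have h2 : 2 ≤ p := hp.two_le
    have : p + 2 ≤ p ^ 2 := by nlinarith
    omega
  have hQpow : Q = p ^ (m * n) := by rw [hQdef, hcard, ← pow_mul]
  -- degree bound on H
  have hHdeg : H.natDegree ≤ p := by
    have hpne : (p : ℤ) ≠ 0 := by exact_mod_cast hp.ne_zero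
    have h1 : (Polynomial.C (p : ℤ) * H).natDegree = H.natDegree :=
      natDegree_C_mul hpne
    have h2 : ((1 - Polynomial.X ^ p : ℤ[X]) - (1 - Polynomial.X) ^ p).natDegree ≤ p := by
      refine le_trans (natDegree_sub_le _ _) (max_le ?_ ?_)
      · exact le_trans (natDegree_sub_le _ _) (by simp)
      · refine natDegree_pow_le.trans ?_
        have : (1 - Polynomial.X : ℤ[X]).natDegree ≤ 1 :=
          le_trans (natDegree_sub_le _ _) (by simp [natDegree_X_le])
        calc p * (1 - Polynomial.X : ℤ[X]).natDegree ≤ p * 1 := Nat.mul_le_mul_left p this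
          _ = p := by omega
    rw [← h1, hH]; exact h2
  set H' : Fq[X] := H.map (Int.castRingHom Fq) with hH'
  have hH'deg : H'.natDegree < p + 1 :=
    lt_of_le_of_lt (le_trans natDegree_map_le hHdeg) (by omega)
  set D : RatFunc Fq := RatFunc.X ^ Q - RatFunc.X with hD
  have hD0 : D ≠ 0 := by
    rw [hD, sub_ne_zero]
    intro h
    rw [← RatFunc.algebraMap_X (K := Fq), ← map_pow] at h
    have h2 := (RatFunc.algebraMap_injective Fq) h
    have h3 : (Polynomial.X ^ Q : Fq[X]).natDegree = (Polynomial.X : Fq[X]).natDegree := by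
      rw [h2]
    simp [natDegree_X_pow, natDegree_X] at h3
    omega
  have key : ∀ θ : Fq,
      Polynomial.aeval ((RatFunc.X + RatFunc.C θ)⁻¹ ^ K) H' /
          (1 - (RatFunc.X + RatFunc.C θ)⁻¹ ^ K) ^ p
        = (∑ j ∈ Finset.range (p + 1),
            algebraMap Fq (RatFunc Fq) (H'.coeff j) *
              ((RatFunc.X ^ Q + RatFunc.C θ) ^ (p - j) * (RatFunc.X + RatFunc.C θ) ^ j)) /
            D ^ p := by
    intro θ
    set f : RatFunc Fq := RatFunc.X + RatFunc.C θ with hf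
    have hf0 : f ≠ 0 := by
      rw [hf, ← RatFunc.algebraMap_X (K := Fq), ← RatFunc.algebraMap_C, ← map_add]
      apply RatFunc.algebraMap_ne_zero
      intro h
      have := congrArg (fun g => Polynomial.coeff g 1) h
      simp at this
    have hfrob : f ^ Q = RatFunc.X ^ Q + RatFunc.C θ := by
      rw [hf, hQpow, add_pow_char_pow]
      congr 1
      rw [← map_pow, ← hQpow]
      congr 1
      exact FiniteField.pow_card_pow n θ
    have hone_sub : 1 - f⁻¹ ^ K = D * f⁻¹ ^ Q := by
      have h1 : f⁻¹ ^ Q * f ^ Q = 1 := by rw [← mul_pow, inv_mul_cancel₀ hf0, one_pow]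
      have h2 : f⁻¹ ^ Q * f = f⁻¹ ^ K := by
        rw [← hKQ, pow_succ, mul_assoc, inv_mul_cancel₀ hf0, mul_one]
      calc 1 - f⁻¹ ^ K = f⁻¹ ^ Q * f ^ Q - f⁻¹ ^ Q * f := by rw [h1, h2]
        _ = f⁻¹ ^ Q * (f ^ Q - f) := by ring
        _ = D * f⁻¹ ^ Q := by
            rw [hfrob, hf]
            have : RatFunc.X ^ Q + RatFunc.C θ - (RatFunc.X + RatFunc.C θ) = D := by
              rw [hD]; ring
            rw [this, mul_comm]
    have haev : (Polynomial.aeval (f⁻¹ ^ K) H') * f ^ (p * Q)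
        = ∑ j ∈ Finset.range (p + 1),
            algebraMap Fq (RatFunc Fq) (H'.coeff j) *
              ((RatFunc.X ^ Q + RatFunc.C θ) ^ (p - j) * (RatFunc.X + RatFunc.C θ) ^ j) := by
      rw [Polynomial.aeval_eq_sum_range' hH'deg, Finset.sum_mul]
      refine Finset.sum_congr rfl fun j hj => ?_
      have hjp : j ≤ p := by simp at hj; omega
      have hexp : K * j + (Q * (p - j) + j) = p * Q := by
        have e1 : K * j + j = Q * j := by rw [← hKQ]; ring
        have e2 : Q * (p - j) + Q * j = Q * p := by
          rw [← Nat.mul_add, Nat.sub_add_cancel hjp]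
        calc K * j + (Q * (p - j) + j) = Q * (p - j) + (K * j + j) := by ring
          _ = Q * (p - j) + Q * j := by rw [e1]
          _ = p * Q := by rw [e2, Nat.mul_comm]
      have hfe : f ^ (p * Q) = f ^ (K * j) * ((f ^ Q) ^ (p - j) * f ^ j) := by
        rw [← pow_mul, ← pow_add, ← pow_add, hexp]
      rw [Algebra.smul_def, mul_assoc]
      congr 1
      calc (f⁻¹ ^ K) ^ j * f ^ (p * Q)
          = (f ^ (K * j))⁻¹ * (f ^ (K * j) * ((f ^ Q) ^ (p - j) * f ^ j)) := by
            rw [← pow_mul, inv_pow, hfe]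
        _ = (f ^ Q) ^ (p - j) * f ^ j := inv_mul_cancel_left₀ (pow_ne_zero _ hf0) _
        _ = (RatFunc.X ^ Q + RatFunc.C θ) ^ (p - j) * (RatFunc.X + RatFunc.C θ) ^ j := by
            rw [hfrob, hf]
    have hden : (D * f⁻¹ ^ Q) ^ p = D ^ p * (f ^ (p * Q))⁻¹ := by
      rw [mul_pow, ← pow_mul, inv_pow, mul_comm Q p]
    rw [hone_sub, ← haev, hden,
      div_eq_div_iff (mul_ne_zero (pow_ne_zero _ hD0) (inv_ne_zero (pow_ne_zero _ hf0)))
        (pow_ne_zero _ hD0)]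
    field_simp
  calc ∑ θ : Fq,
        (Polynomial.aeval ((RatFunc.X + RatFunc.C θ)⁻¹ ^ K) H' /
          (1 - (RatFunc.X + RatFunc.C θ)⁻¹ ^ K) ^ p)
      = ∑ θ : Fq, (∑ j ∈ Finset.range (p + 1),
            algebraMap Fq (RatFunc Fq) (H'.coeff j) *
              ((RatFunc.X ^ Q + RatFunc.C θ) ^ (p - j) * (RatFunc.X + RatFunc.C θ) ^ j)) /
            D ^ p := Finset.sum_congr rfl fun θ _ => key θ
    _ = (∑ j ∈ Finset.range (p + 1), ∑ θ : Fq,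
            algebraMap Fq (RatFunc Fq) (H'.coeff j) *
              ((RatFunc.X ^ Q + RatFunc.C θ) ^ (p - j) * (RatFunc.X + RatFunc.C θ) ^ j)) /
            D ^ p := by rw [← Finset.sum_div, Finset.sum_comm]
    _ = 0 := by
        rw [_root_.div_eq_zero_iff]
        left
        refine Finset.sum_eq_zero fun j hj => ?_
        have hjp : j ≤ p := by simp at hj; omega
        have hz : ∑ θ : Fq,
            (RatFunc.X ^ Q + algebraMap Fq (RatFunc Fq) θ) ^ (p - j) *
              (RatFunc.X + algebraMap Fq (RatFunc Fq) θ) ^ j = 0 := by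
          apply sum_theta_pow
          rw [← hq]
          omega
        simp_rw [← Finset.mul_sum, ← RatFunc.algebraMap_eq_C]
        rw [hz, mul_zero]
end
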